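/- Let W = {(W_i, ω_i)}_{i∈I} be a fusion frame for H with each dim W_i < ∞. Then e(W) = Σ_{i∈I} (dim W_i − ω_i² · trace(π_{W_i} S_W^{-1} π_{W_i})). -/

import Mathlib

noncomputable section
open scoped ENNReal ComplexInnerProductSpace

/-- `W = {(W i, ω i)}` is a fusion frame for `H`. -/
def IsFusionFrame {H : Type} [NormedAddCommGroup H] [InnerProductSpace ℂ H]
    {ι : Type} (W : ι → Submodule ℂ H) [∀ i, (W i).HasOrthogonalProjection]
    (ω : ι → ℝ) : Prop :=
  (∀ i, 0 < ω i) ∧ ∃ A B : ℝ, 0 < A ∧ A ≤ B ∧ ∀ f : H,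
    (A * ‖f‖ ^ 2 ≤ ∑' i, ω i ^ 2 * ‖(Submodule.orthogonalProjectionOnto (W i) f : H)‖ ^ 2) ∧
    (∑' i, ω i ^ 2 * ‖(Submodule.orthogonalProjectionOnto (W i) f : H)‖ ^ 2 ≤ B * ‖f‖ ^ 2)

/-- `W = {(W i, ω i)}` is a fusion Riesz basis for `H`. -/
def IsFusionRieszBasis {H : Type} [NormedAddCommGroup H] [InnerProductSpace ℂ H]
    {ι : Type} (W : ι → Submodule ℂ H) (ω : ι → ℝ) : Prop :=
  (∀ i, 0 < ω i) ∧ (⨆ i, W i).topologicalClosure = ⊤ ∧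
  ∃ C D : ℝ, 0 < C ∧ C ≤ D ∧ ∀ (s : Finset ι) (f : ∀ i, W i),
    (C * ∑ j ∈ s, ‖(f j : H)‖ ^ 2 ≤ ‖∑ j ∈ s, ω j • (f j : H)‖ ^ 2) ∧
    (‖∑ j ∈ s, ω j • (f j : H)‖ ^ 2 ≤ D * ∑ j ∈ s, ‖(f j : H)‖ ^ 2)

/-- trace of an endomorphism of a finite-dimensional complex inner product space,
computed via the standard orthonormal basis. -/
lemma trace_eq_sum_inner' {E : Type*} [NormedAddCommGroup E] [InnerProductSpace ℂ E]
    [FiniteDimensional ℂ E] (T : E →ₗ[ℂ] E) :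
    LinearMap.trace ℂ E T =
      ∑ i, ⟪(stdOrthonormalBasis ℂ E) i, T ((stdOrthonormalBasis ℂ E) i)⟫ := by
  set b := stdOrthonormalBasis ℂ E
  rw [LinearMap.trace_eq_matrix_trace ℂ b.toBasis, Matrix.trace]
  congr 1; ext i
  rw [Matrix.diag_apply, LinearMap.toMatrix_apply, b.coe_toBasis, b.coe_toBasis_repr_apply,
    b.repr_apply_apply]

/-- finite-dimensional Parseval identity. -/
lemma parseval_fin {E : Type*} [NormedAddCommGroup E] [InnerProductSpace ℂ E]
    [FiniteDimensional ℂ E] (v : E) :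
    ∑ i, ‖⟪(stdOrthonormalBasis ℂ E) i, v⟫‖ ^ 2 = ‖v‖ ^ 2 := by
  set b := stdOrthonormalBasis ℂ E
  have := b.repr.norm_map v
  rw [← this, EuclideanSpace.norm_eq, Real.sq_sqrt (by positivity)]
  congr 1; ext i; rw [b.repr_apply_apply]

set_option maxHeartbeats 4000000
set_option synthInstance.maxHeartbeats 1000000

/-- `e(W) = ∑ᵢ (dim W i − ω i ^ 2 · trace (π_{W i} S_W⁻¹ π_{W i}))`,
where the trace is computed as the trace of the endomorphism of `W i`
obtained by restricting `π_{W i} ∘ S_W⁻¹` to `W i`. -/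
theorem excess_eq_tsum_dim_sub_trace
    {H : Type} [NormedAddCommGroup H] [InnerProductSpace ℂ H] [CompleteSpace H]
    {ι : Type} (W : ι → Submodule ℂ H) [∀ i, CompleteSpace (W i)]
    [∀ i, FiniteDimensional ℂ (W i)] (ω : ι → ℝ)
    (hW : IsFusionFrame W ω)
    -- the fusion frame operator `S_W` (an invertible operator):
    (S : H ≃L[ℂ] H)
    (hS : ∀ f : H, S f = ∑' i, ω i ^ 2 • (Submodule.orthogonalProjectionOnto (W i) f : H))
    -- the synthesis operator:
    (TW : lp (fun i => ↥(W i)) 2 →L[ℂ] H)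
    (hTW : ∀ g : lp (fun i => ↥(W i)) 2, TW g = ∑' i, ω i • ((g i : H))) :
    ((Cardinal.toENat (Module.rank ℂ (LinearMap.ker TW.toLinearMap)) : ℕ∞) : ℝ≥0∞) =
      ∑' i : ι, ENNReal.ofReal
        ((Module.finrank ℂ (W i) : ℝ) - ω i ^ 2 *
          (LinearMap.trace ℂ (W i)
            (((Submodule.orthogonalProjectionOnto (W i)).comp
              ((S.symm : H →L[ℂ] H).comp ((W i).subtypeL))).toLinearMap)).re) := by
  classical
  set L2 := lp (fun i => ↥(W i)) 2 with hL2def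
  set A : H →L[ℂ] L2 := ContinuousLinearMap.adjoint TW with hAdef
  have hadj : ∀ (f : H) (g : L2), ⟪A f, g⟫ = ⟪f, TW g⟫ :=
    fun f g => ContinuousLinearMap.adjoint_inner_left TW g f
  have hadj' : ∀ (g : L2) (f : H), ⟪TW g, f⟫ = ⟪g, A f⟫ :=
    fun g f => (ContinuousLinearMap.adjoint_inner_right TW g f).symm
  -- `TW` on singles
  have hTWs : ∀ (i : ι) (v : W i), TW (lp.single 2 i v) = ω i • (v : H) := by
    intro i v
    rw [hTW, tsum_eq_single i]
    · rw [lp.single_apply_self]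
    · intro j hj
      rw [lp.single_apply_ne 2 i _ hj]; simp
  -- the formula for the adjoint
  have hAf : ∀ (f : H) (i : ι), (A f) i = ω i • (Submodule.orthogonalProjectionOnto (W i) f) := by
    intro f i
    apply ext_inner_right ℂ
    intro v
    have h1 := lp.inner_single_right (𝕜 := ℂ) i v (A f)
    rw [← h1, hadj, hTWs,
      RCLike.real_smul_eq_coe_smul (K := ℂ), inner_smul_right,
      RCLike.real_smul_eq_coe_smul (K := ℂ) (ω i) (Submodule.orthogonalProjectionOnto (W i) f),
      inner_smul_left, RCLike.conj_ofReal]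
    congr 1
    exact (Submodule.inner_orthogonalProjectionOnto_eq_of_mem_right (K := W i) v f).symm
  -- `S = TW ∘ A`
  have hSA : ∀ f : H, TW (A f) = S f := by
    intro f
    rw [hTW, hS]
    congr 1; ext i
    rw [hAf]
    push_cast [Submodule.coe_smul]
    rw [smul_smul, ← sq]
  -- the operator `M = A ∘ S⁻¹ ∘ TW` and the projection `P = 1 - M`
  set M : ↥L2 →L[ℂ] ↥L2 := A.comp ((S.symm : H →L[ℂ] H).comp TW) with hMdef
  have hM : ∀ x : ↥L2, M x = A (S.symm (TW x)) := fun _ => rfl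
  have hTWM : ∀ x : ↥L2, TW (M x) = TW x := by
    intro x; rw [hM, hSA]; exact S.apply_symm_apply _
  set P : ↥L2 →L[ℂ] ↥L2 := ContinuousLinearMap.id ℂ ↥L2 - M with hPdef
  have hP : ∀ x : ↥L2, P x = x - M x := fun _ => rfl
  have hTWP : ∀ x : ↥L2, TW (P x) = 0 := by
    intro x; rw [hP, map_sub, hTWM, sub_self]
  have hPfix : ∀ x : ↥L2, TW x = 0 → P x = x := by
    intro x hx
    rw [hP, hM, hx]
    simp
  have hMP : ∀ x : ↥L2, M (P x) = 0 := by
    intro x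
    rw [hM, hTWP]
    simp
  have hPP : ∀ x : ↥L2, P (P x) = P x := by
    intro x
    rw [hP (P x), hMP, sub_zero]
  -- symmetry
  have hSsym : ∀ a b : H, ⟪S a, b⟫ = ⟪a, S b⟫ := by
    intro a b
    rw [← hSA, ← hSA, hadj' (A a) b, hadj a (A b)]
  have hSisym : ∀ a b : H, ⟪S.symm a, b⟫ = ⟪a, S.symm b⟫ := by
    intro a b
    calc ⟪S.symm a, b⟫ = ⟪S.symm a, S (S.symm b)⟫ := by rw [S.apply_symm_apply]
    _ = ⟪S (S.symm a), S.symm b⟫ := (hSsym _ _).symm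
    _ = ⟪a, S.symm b⟫ := by rw [S.apply_symm_apply]
  have hMsym : ∀ x y : ↥L2, ⟪M x, y⟫ = ⟪x, M y⟫ := by
    intro x y
    calc ⟪M x, y⟫ = ⟪S.symm (TW x), TW y⟫ := by rw [hM]; exact hadj _ _
    _ = ⟪TW x, S.symm (TW y)⟫ := hSisym _ _
    _ = ⟪x, M y⟫ := by rw [hM]; exact hadj' _ _
  have hPsym : ∀ x y : ↥L2, ⟪P x, y⟫ = ⟪x, P y⟫ := by
    intro x y
    rw [hP, hP, inner_sub_left, inner_sub_right, hMsym]
  have hinnerP : ∀ x : ↥L2, ⟪x, P x⟫ = ((‖P x‖ : ℂ)) ^ 2 := by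
    intro x
    calc ⟪x, P x⟫ = ⟪x, P (P x)⟫ := by rw [hPP]
    _ = ⟪P x, P x⟫ := (hPsym x (P x)).symm
    _ = _ := inner_self_eq_norm_sq_to_K (𝕜 := ℂ) _
  -- the orthonormal vectors
  set e : (Σ i : ι, Fin (Module.finrank ℂ (W i))) → ↥L2 :=
    fun σ => lp.single 2 σ.1 ((stdOrthonormalBasis ℂ (W σ.1)) σ.2) with hedef
  -- block formula for M
  have hMe : ∀ (i : ι) (v : W i), (M (lp.single 2 i v)) i =
      (ω i ^ 2) • (Submodule.orthogonalProjectionOnto (W i) (S.symm (v : H))) := by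
    intro i v
    rw [hM, hTWs, hAf]
    rw [RCLike.real_smul_eq_coe_smul (K := ℂ) (ω i) ((v : H)), map_smul, map_smul,
      RCLike.real_smul_eq_coe_smul (K := ℂ) (ω i), smul_smul,
      RCLike.real_smul_eq_coe_smul (K := ℂ) (ω i ^ 2)]
    norm_cast
    rw [sq]
  -- the summand as a finite sum of norms
  have hterm : ∀ i : ι,
      ((Module.finrank ℂ (W i) : ℝ) - ω i ^ 2 *
          (LinearMap.trace ℂ (W i)
            (((Submodule.orthogonalProjectionOnto (W i)).comp
              ((S.symm : H →L[ℂ] H).comp ((W i).subtypeL))).toLinearMap)).re)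
      = ∑ j : Fin (Module.finrank ℂ (W i)), ‖P (e ⟨i, j⟩)‖ ^ 2 := by
    intro i
    set b := stdOrthonormalBasis ℂ (W i) with hbdef
    have h1 : ∀ j, ⟪e ⟨i, j⟩, M (e ⟨i, j⟩)⟫ =
        (((ω i ^ 2 : ℝ)) : ℂ) * ⟪b j, Submodule.orthogonalProjectionOnto (W i) (S.symm ((b j : H)))⟫ := by
      intro j
      show ⟪lp.single 2 i (b j), M (lp.single 2 i (b j))⟫ = _
      rw [lp.inner_single_left, hMe, RCLike.real_smul_eq_coe_smul (K := ℂ),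
        inner_smul_right]
      norm_cast
    have h2 : ∀ j, ⟪e ⟨i, j⟩, e ⟨i, j⟩⟫ = 1 := by
      intro j
      show ⟪(lp.single 2 i (b j) : ↥L2), (lp.single 2 i (b j) : ↥L2)⟫ = 1
      rw [lp.inner_single_left, lp.single_apply_self, inner_self_eq_norm_sq_to_K,
        b.orthonormal.1 j]
      norm_num
    have h3 : ∀ j, ‖P (e ⟨i, j⟩)‖ ^ 2 =
        (1 : ℝ) - (ω i ^ 2) * (⟪b j, Submodule.orthogonalProjectionOnto (W i) (S.symm ((b j : H)))⟫).re := by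
      intro j
      have hsub : ⟪e ⟨i, j⟩, P (e ⟨i, j⟩)⟫ = ⟪e ⟨i, j⟩, e ⟨i, j⟩⟫ - ⟪e ⟨i, j⟩, M (e ⟨i, j⟩)⟫ := by
        rw [hP, inner_sub_right]
      rw [hinnerP, h1, h2] at hsub
      have h4 := congrArg Complex.re hsub
      simpa [← Complex.ofReal_pow] using h4
    have h5 : ∀ j, ((((Submodule.orthogonalProjectionOnto (W i)).comp
            ((S.symm : H →L[ℂ] H).comp ((W i).subtypeL))).toLinearMap) (b j))
        = Submodule.orthogonalProjectionOnto (W i) (S.symm ((b j : H))) := by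
      intro j
      simp [ContinuousLinearMap.coe_comp']
    rw [trace_eq_sum_inner']
    simp only [← hbdef, h5]
    simp only [h3]
    rw [Finset.sum_sub_distrib, Finset.sum_const, Finset.card_univ, Fintype.card_fin,
      nsmul_eq_mul, mul_one, ← Finset.mul_sum, Complex.re_sum]
  -- rewrite the right-hand side as a sum over the sigma type
  have hRHS : (∑' i : ι, ENNReal.ofReal
        ((Module.finrank ℂ (W i) : ℝ) - ω i ^ 2 *
          (LinearMap.trace ℂ (W i)
            (((Submodule.orthogonalProjectionOnto (W i)).comp
              ((S.symm : H →L[ℂ] H).comp ((W i).subtypeL))).toLinearMap)).re))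
      = ∑' σ : Σ i : ι, Fin (Module.finrank ℂ (W i)), ENNReal.ofReal (‖P (e σ)‖ ^ 2) := by
    rw [ENNReal.tsum_sigma']
    refine tsum_congr fun i => ?_
    rw [hterm i, ENNReal.ofReal_sum_of_nonneg (fun j _ => sq_nonneg _), tsum_fintype]
  rw [hRHS]
  haveI hKc : CompleteSpace ↥(LinearMap.ker TW.toLinearMap) :=
    (ContinuousLinearMap.isClosed_ker TW).completeSpace_coe
  obtain ⟨w, bK, hbK⟩ := exists_hilbertBasis ℂ ↥(LinearMap.ker TW.toLinearMap)
  have hconv : ∀ x : ℝ, x ^ ((2 : ℝ≥0∞)).toReal = x ^ (2 : ℕ) := fun x => by norm_num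
  -- Step A : Parseval in the kernel
  have hA : ∀ σ : Σ i : ι, Fin (Module.finrank ℂ (W i)), ENNReal.ofReal (‖P (e σ)‖ ^ 2)
      = ∑' f : w, ENNReal.ofReal (‖⟪((f : ↥(LinearMap.ker TW.toLinearMap)) : ↥L2), e σ⟫‖ ^ 2) := by
    intro σ
    have hmem : P (e σ) ∈ LinearMap.ker TW.toLinearMap := LinearMap.mem_ker.mpr (hTWP _)
    set y : ↥(LinearMap.ker TW.toLinearMap) := ⟨P (e σ), hmem⟩ with hydef
    have hsum := bK.hasSum_inner_mul_inner y y
    have h7 : ∀ f : w, ⟪y, bK f⟫ = ⟪e σ, ((f : ↥(LinearMap.ker TW.toLinearMap)) : ↥L2)⟫ := by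
      intro f
      have hf1 : bK f = (f : ↥(LinearMap.ker TW.toLinearMap)) := congrFun hbK f
      have hfk : TW ((f : ↥(LinearMap.ker TW.toLinearMap)) : ↥L2) = 0 :=
        LinearMap.mem_ker.mp (f : ↥(LinearMap.ker TW.toLinearMap)).2
      rw [hf1]
      calc ⟪y, (f : ↥(LinearMap.ker TW.toLinearMap))⟫
          = ⟪P (e σ), ((f : ↥(LinearMap.ker TW.toLinearMap)) : ↥L2)⟫ := by
            rw [Submodule.coe_inner]
      _ = ⟪e σ, P ((f : ↥(LinearMap.ker TW.toLinearMap)) : ↥L2)⟫ := hPsym _ _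
      _ = ⟪e σ, ((f : ↥(LinearMap.ker TW.toLinearMap)) : ↥L2)⟫ := by rw [hPfix _ hfk]
    have h6 : ∀ f : w, ⟪y, bK f⟫ * ⟪bK f, y⟫
        = ((‖⟪((f : ↥(LinearMap.ker TW.toLinearMap)) : ↥L2), e σ⟫‖ ^ 2 : ℝ) : ℂ) := by
      intro f
      rw [show ⟪bK f, y⟫ = (starRingEnd ℂ) ⟪y, bK f⟫ from by rw [Submodule.coe_inner, Submodule.coe_inner]; exact (inner_conj_symm _ _).symm, RCLike.mul_conj, h7, norm_inner_symm]
      norm_cast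
    have hyy : ⟪y, y⟫ = ((‖P (e σ)‖ ^ 2 : ℝ) : ℂ) := by
      rw [show ⟪y, y⟫ = ((‖y‖ : ℂ)) ^ 2 from by rw [Submodule.coe_inner]; exact inner_self_eq_norm_sq_to_K _]
      have h8 : ‖y‖ = ‖P (e σ)‖ := rfl
      rw [h8]
      norm_cast
    rw [funext h6, hyy] at hsum
    have hsum2 : HasSum
        (fun f : w => ‖⟪((f : ↥(LinearMap.ker TW.toLinearMap)) : ↥L2), e σ⟫‖ ^ 2) (‖P (e σ)‖ ^ 2) := by
      have h9 := Complex.reCLM.hasSum hsum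
      simp only [Complex.reCLM_apply, Complex.ofReal_re] at h9
      exact h9
    rw [← hsum2.tsum_eq, ENNReal.ofReal_tsum_of_nonneg (fun f => sq_nonneg _) hsum2.summable]
  rw [tsum_congr hA, ENNReal.tsum_comm]
  -- Step C : each basis vector of the kernel contributes 1
  have hC : ∀ f : w, (∑' σ : Σ i : ι, Fin (Module.finrank ℂ (W i)),
      ENNReal.ofReal (‖⟪((f : ↥(LinearMap.ker TW.toLinearMap)) : ↥L2), e σ⟫‖ ^ 2)) = 1 := by
    intro f
    set z : ↥L2 := ((f : ↥(LinearMap.ker TW.toLinearMap)) : ↥L2) with hzdef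
    have hz : ∀ (i : ι) (j : Fin (Module.finrank ℂ (W i))),
        ‖⟪z, e ⟨i, j⟩⟫‖ = ‖⟪(stdOrthonormalBasis ℂ (W i)) j, (z : ∀ k, ↥(W k)) i⟫‖ := by
      intro i j
      show ‖⟪z, (lp.single 2 i ((stdOrthonormalBasis ℂ (W i)) j) : ↥L2)⟫‖ = _
      rw [lp.inner_single_right, norm_inner_symm]
    rw [ENNReal.tsum_sigma']
    have hzi : ∀ i : ι, (∑' j : Fin (Module.finrank ℂ (W i)),
        ENNReal.ofReal (‖⟪z, e ⟨i, j⟩⟫‖ ^ 2)) = ENNReal.ofReal (‖(z : ∀ k, ↥(W k)) i‖ ^ 2) := by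
      intro i
      rw [tsum_fintype, ← ENNReal.ofReal_sum_of_nonneg (fun j _ => sq_nonneg _)]
      congr 1
      rw [← parseval_fin ((z : ∀ k, ↥(W k)) i)]
      exact Finset.sum_congr rfl fun j _ => by rw [hz i j]
    rw [tsum_congr hzi]
    have hsummable' : Summable fun i => ‖(z : ∀ k, ↥(W k)) i‖ ^ (2 : ℕ) := by
      have h10 := (lp.memℓp z).summable (by norm_num : (0:ℝ) < (2 : ℝ≥0∞).toReal)
      simpa [hconv] using h10
    have hnorm' : ‖z‖ ^ (2 : ℕ) = ∑' i, ‖(z : ∀ k, ↥(W k)) i‖ ^ (2 : ℕ) := by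
      have h11 := lp.norm_rpow_eq_tsum (by norm_num : (0:ℝ) < (2 : ℝ≥0∞).toReal) z
      simpa [hconv] using h11
    have hz1 : ‖z‖ = 1 := by
      have hON : Orthonormal ℂ ((↑) : w → ↥(LinearMap.ker TW.toLinearMap)) := by
        have h8 := bK.orthonormal
        rwa [hbK] at h8
      exact hON.1 f
    calc (∑' i : ι, ENNReal.ofReal (‖(z : ∀ k, ↥(W k)) i‖ ^ 2))
        = ENNReal.ofReal (∑' i : ι, ‖(z : ∀ k, ↥(W k)) i‖ ^ 2) :=
          (ENNReal.ofReal_tsum_of_nonneg (fun i => sq_nonneg _) hsummable').symm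
    _ = ENNReal.ofReal (‖z‖ ^ 2) := by rw [← hnorm']
    _ = 1 := by rw [hz1]; norm_num
  rw [tsum_congr hC]
  -- Step D : count the basis vectors
  have hli : LinearIndependent ℂ ((↑) : w → ↥(LinearMap.ker TW.toLinearMap)) := by
    have h12 := bK.orthonormal.linearIndependent
    rwa [hbK] at h12
  have hdense := bK.dense_span
  rw [hbK, Subtype.range_coe] at hdense
  by_cases hfin : FiniteDimensional ℂ ↥(LinearMap.ker TW.toLinearMap)
  · have hwfin : w.Finite := hli.set_finite_of_isNoetherian
    haveI := hwfin.fintype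
    have hclosed : IsClosed ((Submodule.span ℂ w :
        Submodule ℂ ↥(LinearMap.ker TW.toLinearMap)) : Set ↥(LinearMap.ker TW.toLinearMap)) :=
      Submodule.closed_of_finiteDimensional _
    have hsp : Submodule.span ℂ w = ⊤ := by
      rw [← hclosed.submodule_topologicalClosure_eq]
      exact hdense
    have hbasis : Module.Basis w ℂ ↥(LinearMap.ker TW.toLinearMap) := Module.Basis.mk hli (by rw [Subtype.range_coe]; exact le_of_eq hsp.symm)
    have hrank : Module.rank ℂ ↥(LinearMap.ker TW.toLinearMap) = Fintype.card w :=
      rank_eq_card_basis hbasis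
    rw [hrank, tsum_fintype]
    simp
    rw [← hwfin.cast_ncard_eq]
    exact ENat.toENNReal_coe _
  · have hwinf : w.Infinite := by
      intro hwfin
      apply hfin
      haveI h13 : FiniteDimensional ℂ
          (Submodule.span ℂ w : Submodule ℂ ↥(LinearMap.ker TW.toLinearMap)) :=
        FiniteDimensional.span_of_finite ℂ hwfin
      have hclosed : IsClosed ((Submodule.span ℂ w :
          Submodule ℂ ↥(LinearMap.ker TW.toLinearMap)) : Set ↥(LinearMap.ker TW.toLinearMap)) :=
        Submodule.closed_of_finiteDimensional _
      have hsp : Submodule.span ℂ w = ⊤ := by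
        rw [← hclosed.submodule_topologicalClosure_eq]
        exact hdense
      rw [hsp] at h13
      exact Module.Finite.equiv (Submodule.topEquiv)
    haveI : Infinite w := hwinf.to_subtype
    have htop : Cardinal.toENat (Module.rank ℂ ↥(LinearMap.ker TW.toLinearMap)) = ⊤ := by
      rw [Cardinal.toENat_eq_top]
      by_contra hlt
      rw [not_le] at hlt
      exact hfin (Module.rank_lt_aleph0_iff.mp hlt)
    rw [htop, ENNReal.tsum_const_eq_top_of_ne_zero one_ne_zero]
    simp
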